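/- If r_1 > 1 and r_{N−1} > 1 (invasion scenario B→→A, hence evolutionary scenario B⇒⇒A), then π_i > i/N for every i ∈ {1,…,N−1}, and the discrete derivative is strictly decreasing: d_i > d_{i+1} for every 1 ≤ i ≤ N−1. -/

import Mathlib

set_option maxHeartbeats 1000000 in
/-- in scenario B→→A (r_1 > 1 and r_{N-1} > 1), π_i > i/N for all
1 ≤ i ≤ N−1, and the discrete derivative is strictly decreasing. -/
theorem moran_graph_shape_A_dominates_B
    (N : ℕ) (hN : 3 ≤ N) (a b c d w : ℝ)
    (ha : 0 < a) (hb : 0 < b) (hc : 0 < c) (hd : 0 < d)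
    (hw0 : 0 ≤ w) (hw1 : w ≤ 1)
    (r : ℕ → ℝ)
    (hr : ∀ i, 1 ≤ i → i ≤ N - 1 →
      r i = (1 - w + w * (a * ((i : ℝ) - 1) / ((N : ℝ) - 1) +
                b * ((N : ℝ) - (i : ℝ)) / ((N : ℝ) - 1))) /
            (1 - w + w * (c * (i : ℝ) / ((N : ℝ) - 1) +
                d * ((N : ℝ) - (i : ℝ) - 1) / ((N : ℝ) - 1))))
    (hrpos : ∀ i, 1 ≤ i → i ≤ N - 1 → 0 < r i)
    (π : ℕ → ℝ) (hπ0 : π 0 = 0) (hπN : π N = 1)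
    (hπ : ∀ i, 1 ≤ i → i ≤ N - 1 →
      π i = (1 + ∑ j ∈ Finset.Icc 1 (i - 1), ∏ k ∈ Finset.Icc 1 j, (r k)⁻¹) /
            (1 + ∑ j ∈ Finset.Icc 1 (N - 1), ∏ k ∈ Finset.Icc 1 j, (r k)⁻¹))
    (dd : ℕ → ℝ) (hdd : ∀ i, 1 ≤ i → i ≤ N → dd i = π i - π (i - 1))
    (hr1 : 1 < r 1) (hrN1 : 1 < r (N - 1)) :
    (∀ i, 1 ≤ i → i ≤ N - 1 → (i : ℝ) / N < π i) ∧
    (∀ i, 1 ≤ i → i ≤ N - 1 → dd (i + 1) < dd i) := by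
  have hNR : (3:ℝ) ≤ (N:ℝ) := by exact_mod_cast hN
  have hN1 : (0:ℝ) < (N:ℝ) - 1 := by linarith
  have hNcast : ((N - 1 : ℕ) : ℝ) = (N:ℝ) - 1 := by
    have : 1 ≤ N := by omega
    push_cast [this]; ring
  -- the affine function L
  set L : ℝ → ℝ := fun x => a * (x - 1) + b * ((N:ℝ) - x) - c * x - d * ((N:ℝ) - x - 1) with hL
  -- denominators positive
  have hG : ∀ i : ℕ, 1 ≤ i → i ≤ N - 1 →
      0 < 1 - w + w * (c * (i : ℝ) / ((N : ℝ) - 1) + d * ((N : ℝ) - (i : ℝ) - 1) / ((N : ℝ) - 1)) := by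
    intro i h1 h2
    have h1R : (1:ℝ) ≤ (i:ℝ) := by exact_mod_cast h1
    have h2R : (i:ℝ) ≤ (N:ℝ) - 1 := by
      have := hNcast ▸ (Nat.cast_le.mpr h2 : ((i:ℕ):ℝ) ≤ ((N-1:ℕ):ℝ)); linarith [this]
    have hni : (0:ℝ) ≤ (N:ℝ) - (i:ℝ) - 1 := by linarith
    have e1 : 0 ≤ w * (d * ((N:ℝ) - (i:ℝ) - 1) / ((N:ℝ) - 1)) :=
      mul_nonneg hw0 (div_nonneg (mul_nonneg hd.le hni) hN1.le)
    have e2 : 0 ≤ w * (c * (i:ℝ) / ((N:ℝ) - 1)) := by positivity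
    rcases lt_or_eq_of_le hw1 with h | h
    · nlinarith
    · subst h
      have : (0:ℝ) < 1 * (c * (i:ℝ) / ((N:ℝ) - 1)) := by positivity
      nlinarith
  -- key: w * L > 0 at endpoints
  have key : ∀ i : ℕ, 1 ≤ i → i ≤ N - 1 → 1 < r i → 0 < w * L (i:ℝ) := by
    intro i h1 h2 hri
    have h1R : (1:ℝ) ≤ (i:ℝ) := by exact_mod_cast h1
    have h2R : (i:ℝ) ≤ (N:ℝ) - 1 := by
      have := (Nat.cast_le.mpr h2 : ((i:ℕ):ℝ) ≤ ((N-1:ℕ):ℝ)); rw [hNcast] at this; linarith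
    have hGi := hG i h1 h2
    rw [hr i h1 h2] at hri
    rw [lt_div_iff₀ hGi] at hri
    have : 0 < w * L (i:ℝ) / ((N:ℝ) - 1) := by
      have hexp : w * L (i:ℝ) / ((N:ℝ) - 1) =
        (1 - w + w * (a * ((i : ℝ) - 1) / ((N : ℝ) - 1) + b * ((N : ℝ) - (i : ℝ)) / ((N : ℝ) - 1)))
        - (1 - w + w * (c * (i : ℝ) / ((N : ℝ) - 1) + d * ((N : ℝ) - (i : ℝ) - 1) / ((N : ℝ) - 1))) := by
        simp only [hL]; field_simp; ring
      rw [hexp]; linarith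
      -- from hri : 1 * G < F
    rcases div_pos_iff.mp this with ⟨h, _⟩ | ⟨_, h⟩
    · exact h
    · linarith
  have hwL1 : 0 < w * L 1 := by
    have := key 1 le_rfl (by omega) hr1
    simpa using this
  have hwLN : 0 < w * L ((N:ℝ) - 1) := by
    have := key (N - 1) (by omega) le_rfl hrN1
    rwa [hNcast] at this
  have hw : 0 < w := by
    rcases hw0.lt_or_eq with h | h
    · exact h
    · exfalso; rw [← h] at hwL1; simp at hwL1
  have hL1 : 0 < L 1 := by
    rcases mul_pos_iff.mp hwL1 with ⟨_, h⟩ | ⟨h, _⟩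
    · exact h
    · linarith
  have hLN : 0 < L ((N:ℝ) - 1) := by
    rcases mul_pos_iff.mp hwLN with ⟨_, h⟩ | ⟨h, _⟩
    · exact h
    · linarith
  -- r i > 1 on the whole range
  have hrgt : ∀ i : ℕ, 1 ≤ i → i ≤ N - 1 → 1 < r i := by
    intro i h1 h2
    have h1R : (1:ℝ) ≤ (i:ℝ) := by exact_mod_cast h1
    have h2R : (i:ℝ) ≤ (N:ℝ) - 1 := by
      have := (Nat.cast_le.mpr h2 : ((i:ℕ):ℝ) ≤ ((N-1:ℕ):ℝ)); rw [hNcast] at this; linarith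
    have hm : 0 < min (L 1) (L ((N:ℝ) - 1)) := lt_min hL1 hLN
    have hLi : 0 < L (i:ℝ) := by
      have e1 : 0 ≤ ((N:ℝ) - 1 - (i:ℝ)) * (L 1 - min (L 1) (L ((N:ℝ) - 1))) :=
        mul_nonneg (by linarith) (by simp [min_le_left])
      have e2 : 0 ≤ ((i:ℝ) - 1) * (L ((N:ℝ) - 1) - min (L 1) (L ((N:ℝ) - 1))) :=
        mul_nonneg (by linarith) (by simp [min_le_right])
      simp only [hL] at e1 e2 hm ⊢
      nlinarith [hm, e1, e2]
    rw [hr i h1 h2, one_lt_div (hG i h1 h2)]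
    have hexp : (1 - w + w * (a * ((i : ℝ) - 1) / ((N : ℝ) - 1) + b * ((N : ℝ) - (i : ℝ)) / ((N : ℝ) - 1)))
        - (1 - w + w * (c * (i : ℝ) / ((N : ℝ) - 1) + d * ((N : ℝ) - (i : ℝ) - 1) / ((N : ℝ) - 1)))
        = w * L (i:ℝ) / ((N:ℝ) - 1) := by
      simp only [hL]; field_simp; ring
    have hpos : 0 < w * L (i:ℝ) / ((N:ℝ) - 1) := by positivity
    linarith [hexp ▸ hpos]
  -- products
  set P : ℕ → ℝ := fun j => ∏ k ∈ Finset.Icc 1 j, (r k)⁻¹ with hPdef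
  have hP0 : P 0 = 1 := by simp [hPdef]
  have hPpos : ∀ j, j ≤ N - 1 → 0 < P j := by
    intro j hj
    apply Finset.prod_pos
    intro k hk
    rw [Finset.mem_Icc] at hk
    exact inv_pos.2 (hrpos k hk.1 (le_trans hk.2 hj))
  have hPsucc : ∀ j, P (j + 1) = P j * (r (j + 1))⁻¹ := by
    intro j
    simp only [hPdef]
    exact Finset.prod_Icc_succ_top (by omega) _
  have hPdec : ∀ j, j + 1 ≤ N - 1 → P (j + 1) < P j := by
    intro j hj
    have hrj := hrgt (j + 1) (by omega) hj
    have hp := hPpos j (by omega)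
    rw [hPsucc]
    have h1 : (r (j + 1))⁻¹ < 1 := inv_lt_one_of_one_lt₀ hrj
    exact mul_lt_of_lt_one_right hp h1
  have hPanti : ∀ j k, j ≤ k → k ≤ N - 1 → P k ≤ P j := by
    intro j k hjk hk
    induction k with
    | zero =>
      have : j = 0 := by omega
      simp [this]
    | succ n ih =>
      rcases Nat.lt_or_ge j (n + 1) with h | h
      · exact le_trans (hPdec n hk).le (ih (by omega) (by omega))
      · have : j = n + 1 := by omega
        simp [this]
  have hPstrict : ∀ j k, j < k → k ≤ N - 1 → P k < P j := by
    intro j k hjk hk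
    obtain ⟨m, rfl⟩ : ∃ m, k = m + 1 := ⟨k - 1, by omega⟩
    exact lt_of_lt_of_le (hPdec m hk) (hPanti j m (by omega) (by omega))
  -- sums
  have hsum_range : ∀ i, 1 ≤ i →
      (∑ j ∈ Finset.range i, P j) = 1 + ∑ j ∈ Finset.Icc 1 (i - 1), P j := by
    intro i h1
    obtain ⟨m, rfl⟩ : ∃ m, i = m + 1 := ⟨i - 1, by omega⟩
    have hins : Finset.range (m + 1) = insert 0 (Finset.Icc 1 m) := by
      ext x; simp only [Finset.mem_range, Finset.mem_insert, Finset.mem_Icc]; omega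
    rw [hins, Finset.sum_insert (by simp)]
    simp [hP0]
  set D : ℝ := 1 + ∑ j ∈ Finset.Icc 1 (N - 1), P j with hDdef
  have hDD : (∑ j ∈ Finset.range N, P j) = D := hsum_range N (by omega)
  have hDpos : 0 < D := by
    have : 0 ≤ ∑ j ∈ Finset.Icc 1 (N - 1), P j := by
      apply Finset.sum_nonneg
      intro j hj
      rw [Finset.mem_Icc] at hj
      exact (hPpos j hj.2).le
    rw [hDdef]; linarith
  have hπeq : ∀ i, i ≤ N → π i = (∑ j ∈ Finset.range i, P j) / D := by
    intro i hi
    rcases Nat.eq_zero_or_pos i with rfl | h1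
    · simp [hπ0]
    rcases eq_or_lt_of_le hi with rfl | hlt
    · rw [hπN, hDD, div_self (ne_of_gt hDpos)]
    · exact hπ i h1 (by omega) |>.trans (by rw [hsum_range i h1])
  have hddeq : ∀ i, 1 ≤ i → i ≤ N → dd i = P (i - 1) / D := by
    intro i h1 h2
    rw [hdd i h1 h2, hπeq i h2, hπeq (i - 1) (by omega)]
    obtain ⟨m, rfl⟩ : ∃ m, i = m + 1 := ⟨i - 1, by omega⟩
    simp only [Nat.add_sub_cancel]
    rw [Finset.sum_range_succ]
    ring
  constructor
  · -- π i > i / N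
    intro i h1 h2
    have h1R : (1:ℝ) ≤ (i:ℝ) := by exact_mod_cast h1
    have h2R : (i:ℝ) ≤ (N:ℝ) - 1 := by
      have := (Nat.cast_le.mpr h2 : ((i:ℕ):ℝ) ≤ ((N-1:ℕ):ℝ)); rw [hNcast] at this; linarith
    rw [hπeq i (by omega), div_lt_div_iff₀ (by linarith : (0:ℝ) < (N:ℝ)) hDpos]
    rw [← hDD]
    have hsplit : (∑ j ∈ Finset.range N, P j)
        = (∑ j ∈ Finset.range i, P j) + ∑ j ∈ Finset.Ico i N, P j := by
      rw [Finset.range_eq_Ico, Finset.range_eq_Ico]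
      exact (Finset.sum_Ico_consecutive P (k := N) (Nat.zero_le i) (by omega)).symm
    set S := ∑ j ∈ Finset.range i, P j with hS
    set T := ∑ j ∈ Finset.Ico i N, P j with hT
    have hSlb : (i:ℝ) * P (i - 1) ≤ S := by
      have := Finset.card_nsmul_le_sum (Finset.range i) P (P (i - 1)) (by
        intro j hj
        rw [Finset.mem_range] at hj
        exact hPanti j (i - 1) (by omega) (by omega))
      simpa [Finset.card_range, nsmul_eq_mul] using this
    have hTub : T ≤ ((N:ℝ) - (i:ℝ)) * P i := by
      have := Finset.sum_le_card_nsmul (Finset.Ico i N) P (P i) (by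
        intro j hj
        rw [Finset.mem_Ico] at hj
        exact hPanti i j hj.1 (by omega))
      have hcard : ((Finset.Ico i N).card : ℝ) = (N:ℝ) - (i:ℝ) := by
        rw [Nat.card_Ico]
        have : i ≤ N := by omega
        push_cast [this]; ring
      rw [nsmul_eq_mul, hcard] at this
      exact this
    have hstep : P i < P (i - 1) := hPstrict (i - 1) i (by omega) h2
    have hPipos : 0 < P i := hPpos i h2
    have hNi : (1:ℝ) ≤ (N:ℝ) - (i:ℝ) := by linarith
    rw [hsplit]
    nlinarith [mul_le_mul_of_nonneg_left hTub (by linarith : (0:ℝ) ≤ (i:ℝ)),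
      mul_le_mul_of_nonneg_left hSlb (by linarith : (0:ℝ) ≤ (N:ℝ) - (i:ℝ)),
      mul_lt_mul_of_pos_left hstep (by nlinarith : (0:ℝ) < (i:ℝ) * ((N:ℝ) - (i:ℝ)))]
  · -- dd strictly decreasing
    intro i h1 h2
    rw [hddeq (i + 1) (by omega) (by omega), hddeq i (by omega) (by omega)]
    simp only [Nat.add_sub_cancel]
    obtain ⟨m, rfl⟩ : ∃ m, i = m + 1 := ⟨i - 1, by omega⟩
    simp only [Nat.add_sub_cancel]
    have hlt := hPdec m h2
    gcongr
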